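/- Let q be a prime power and r ≥ 2, ℓ ≥ 1 integers, and regard V = 𝔽_{q^ℓ}^r as an 𝔽_q-vector space. For c ∈ 𝔽_{q^ℓ} let H_c := { x·(1, c, c², …, c^{r−1}) : x ∈ 𝔽_{q^ℓ} }, and for b ∈ 𝔽_{q^ℓ}^× let W_b := { (y_0, …, y_{r−1}) ∈ V : y_{r−1} = b·y_0^q }. Then for every b, c ∈ 𝔽_{q^ℓ}^×: W_b ∩ H_c ≠ {0} if and only if there exists s ∈ 𝔽_{q^ℓ}^× with N_{𝔽_{q^ℓ}/𝔽_q}(s) = 1 and c^{r−1} = b·s. -/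

import Mathlib

open Module Finset

private lemma geom_nat_aux (q : ℕ) (hq : 1 ≤ q) (ℓ : ℕ) :
    (q - 1) * ∑ i ∈ Finset.range ℓ, q ^ i = q ^ ℓ - 1 := by
  induction ℓ with
  | zero => simp
  | succ n ih =>
    have h1 : 1 ≤ q ^ n := Nat.one_le_pow _ _ hq
    have h2 : q ^ n ≤ q ^ n * q := Nat.le_mul_of_pos_right _ hq
    have hmul : (q - 1) * q ^ n = q ^ n * q - q ^ n := by
      rw [Nat.sub_mul, one_mul, mul_comm]
    rw [Finset.sum_range_succ, Nat.mul_add, ih, pow_succ, hmul]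
    omega

private lemma norm_formula_aux (F E : Type*) [Field F] [Fintype F] [Field E] [Fintype E]
    [Algebra F E] (s : E) :
    algebraMap F E (Algebra.norm F s) =
      s ^ (∑ i ∈ Finset.range (finrank F E), Fintype.card F ^ i) := by
  set q := Fintype.card F with hq
  have hq2 : 2 ≤ q := Fintype.one_lt_card
  set ℓ := finrank F E with hℓdef
  have hℓpos : 0 < ℓ := finrank_pos
  have hcard : Fintype.card E = q ^ ℓ := card_eq_pow_finrank
  -- construct the Frobenius `x ↦ x ^ q` as an `F`-algebra automorphism of `E`
  obtain ⟨p, hpchar⟩ := CharP.exists F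
  haveI : CharP F p := hpchar
  obtain ⟨n, hp, hn⟩ := FiniteField.card F p
  haveI : CharP E p := charP_of_injective_algebraMap' F (A := E) p
  haveI : Fact p.Prime := ⟨hp⟩
  have hfrob_alg : ∀ a : F, (algebraMap F E a) ^ q = algebraMap F E a := by
    intro a
    rw [← map_pow, FiniteField.pow_card]
  let ψ : E →ₐ[F] E :=
    { toRingHom := (iterateFrobenius E p n : E →+* E)
      commutes' := by
        intro a
        show (algebraMap F E a) ^ p ^ (n : ℕ) = algebraMap F E a
        rw [← hn, hfrob_alg] }
  have hψ : ∀ x : E, ψ x = x ^ q := by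
    intro x
    show x ^ p ^ (n : ℕ) = x ^ q
    rw [← hn]
  let φ : E ≃ₐ[F] E := AlgEquiv.ofBijective ψ
    ((Finite.injective_iff_bijective).mp ψ.toRingHom.injective)
  have hφ : ∀ x : E, φ x = x ^ q := hψ
  have hpow : ∀ (i : ℕ) (x : E), (φ ^ i) x = x ^ q ^ i := by
    intro i
    induction i with
    | zero => intro x; simp
    | succ i ih =>
      intro x
      rw [pow_succ', AlgEquiv.mul_apply, hφ, ih, ← pow_mul, pow_succ', mul_comm]
  have hφℓ : φ ^ ℓ = 1 := by
    apply AlgEquiv.ext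
    intro x
    rw [hpow, AlgEquiv.one_apply, ← hcard, FiniteField.pow_card]
  have hne : ∀ i, 0 < i → i < ℓ → φ ^ i ≠ 1 := by
    intro i hi0 hiℓ h1
    have hall : ∀ x : Eˣ, x ^ (q ^ i - 1) = 1 := by
      intro x
      have hx : (x : E) ^ q ^ i = (x : E) := by
        have := congrArg (fun f : E ≃ₐ[F] E => f (x : E)) h1
        simpa [hpow] using this
      have hq1 : 1 ≤ q ^ i := Nat.one_le_pow _ _ (by omega)
      have : (x : E) ^ (q ^ i - 1) * (x : E) = 1 * (x : E) := by
        rw [one_mul, ← pow_succ]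
        rw [Nat.sub_add_cancel hq1]
        exact hx
      have hx0 : (x : E) ≠ 0 := Units.ne_zero x
      have hv : (x : E) ^ (q ^ i - 1) = 1 := mul_right_cancel₀ hx0 this
      ext
      simpa using hv
    have hdvd := (FiniteField.forall_pow_eq_one_iff (K := E) (q ^ i - 1)).mp hall
    rw [hcard] at hdvd
    have hilt : q ^ i < q ^ ℓ := Nat.pow_lt_pow_right (by omega) hiℓ
    have hipos : 2 ≤ q ^ i := by
      calc 2 = 2 ^ 1 := rfl
        _ ≤ q ^ i := Nat.pow_le_pow_left (by omega) i |>.trans' (Nat.pow_le_pow_right (by omega) (by omega))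
    have := Nat.le_of_dvd (by omega) hdvd
    omega
  have ho : orderOf φ = ℓ := by
    have hd : orderOf φ ∣ ℓ := orderOf_dvd_of_pow_eq_one hφℓ
    have hd0 : 0 < orderOf φ := by
      rcases Nat.eq_zero_or_pos (orderOf φ) with h | h
      · rw [h] at hd; omega
      · exact h
    rcases lt_or_eq_of_le (Nat.le_of_dvd hℓpos hd) with h | h
    · exact absurd (pow_orderOf_eq_one φ) (hne _ hd0 h)
    · exact h
  have hGal : Fintype.card (E ≃ₐ[F] E) = ℓ := Nat.card_eq_fintype_card.symm.trans (IsGalois.card_aut_eq_finrank F E)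
  have hbij : Function.Bijective (fun i : Fin ℓ => φ ^ (i : ℕ)) := by
    rw [Fintype.bijective_iff_injective_and_card]
    refine ⟨?_, by simp [hGal]⟩
    intro i j hij
    exact Fin.ext (pow_injOn_Iio_orderOf (by rw [ho]; exact i.2) (by rw [ho]; exact j.2) hij)
  calc algebraMap F E (Algebra.norm F s) = ∏ σ : E ≃ₐ[F] E, σ s :=
        Algebra.norm_eq_prod_automorphisms F s
    _ = ∏ i : Fin ℓ, (φ ^ (i : ℕ)) s :=
        (Fintype.prod_bijective _ hbij _ _ (fun i => rfl)).symm
    _ = ∏ i : Fin ℓ, s ^ q ^ (i : ℕ) := by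
        exact Finset.prod_congr rfl (fun i _ => hpow _ _)
    _ = s ^ ∑ i : Fin ℓ, q ^ (i : ℕ) := Finset.prod_pow_eq_pow_sum _ _ _
    _ = s ^ ∑ i ∈ Finset.range ℓ, q ^ i := by rw [Fin.sum_univ_eq_sum_range]

private lemma norm_one_iff_pow_aux (F E : Type*) [Field F] [Fintype F] [Field E] [Fintype E]
    [Algebra F E] (s : E) (hs : s ≠ 0) :
    Algebra.norm F s = 1 ↔ ∃ x : E, x ≠ 0 ∧ x ^ (Fintype.card F - 1) = s := by
  classical
  set q := Fintype.card F with hq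
  have hq2 : 2 ≤ q := Fintype.one_lt_card
  set ℓ := finrank F E with hℓdef
  have hℓpos : 0 < ℓ := finrank_pos
  set e := ∑ i ∈ Finset.range ℓ, q ^ i with he_def
  have hqE : Fintype.card E = q ^ ℓ := card_eq_pow_finrank
  have hgeom : (q - 1) * e = Fintype.card E - 1 := by
    rw [hqE]; exact geom_nat_aux q (by omega) ℓ
  have hepos : 0 < e := by
    apply Finset.sum_pos (fun i _ => Nat.pow_pos (n := i) (by omega))
    exact Finset.nonempty_range_iff.mpr (by omega)
  have hformula : ∀ t : E, Algebra.norm F t = 1 ↔ t ^ e = 1 := by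
    intro t
    constructor
    · intro h
      have := norm_formula_aux F E t
      rw [h, map_one] at this
      exact this.symm
    · intro h
      apply (algebraMap F E).injective
      rw [map_one, norm_formula_aux F E t, h]
  constructor
  · intro h
    obtain ⟨g, hg⟩ := IsCyclic.exists_generator (α := Eˣ)
    have horder : orderOf g = Fintype.card Eˣ :=
      (orderOf_eq_card_of_forall_mem_zpowers hg).trans Nat.card_eq_fintype_card
    set u : Eˣ := Units.mk0 s hs with hu
    obtain ⟨k, hk⟩ : ∃ k : ℕ, g ^ k = u := by
      have := hg u
      rw [← mem_powers_iff_mem_zpowers] at this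
      exact this
    have hse : s ^ e = 1 := (hformula s).mp h
    have hue : u ^ e = 1 := by
      ext
      simpa [hu] using hse
    have hdvd : orderOf g ∣ k * e := by
      apply orderOf_dvd_of_pow_eq_one
      rw [pow_mul, hk, hue]
    rw [horder, Fintype.card_units, ← hgeom] at hdvd
    have hm : (q - 1) ∣ k := (Nat.mul_dvd_mul_iff_right hepos).mp hdvd
    obtain ⟨t, ht⟩ := hm
    refine ⟨((g ^ t : Eˣ) : E), Units.ne_zero _, ?_⟩
    have : (g ^ t) ^ (q - 1) = u := by
      rw [← pow_mul, mul_comm, ← ht, hk]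
    have := congrArg (Units.val) this
    simpa [hu] using this
  · rintro ⟨x, hx, rfl⟩
    rw [hformula, ← pow_mul, hgeom]
    exact FiniteField.pow_card_sub_one_eq_one x hx

/-- Lemma: nontrivial-intersection criterion.
In `V = E^r` over `F`, with `H_c = { x·(1, c, …, c^{r-1}) }` and
`W_b = { y : y_{r-1} = b·y_0^q }`, for all `b, c ∈ E^×`:
`W_b ∩ H_c ≠ {0}` if and only if `c^{r-1} ∈ bΣ`, where
`Σ = { s ∈ E^× : N_{E/F}(s) = 1 }` is the norm-one subgroup. -/
theorem Wb_meets_Hc_iff_norm_one_coset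
    (q r ℓ : ℕ) (hr : 2 ≤ r) (hℓ : 1 ≤ ℓ)
    (F E : Type*) [Field F] [Fintype F] [Field E] [Fintype E] [Algebra F E]
    (hq : Fintype.card F = q) (hE : Fintype.card E = q ^ ℓ)
    (b c : E) (hb : b ≠ 0) (hc : c ≠ 0) :
    (∃ v : Fin r → E, v ≠ 0 ∧
        v ⟨r - 1, by omega⟩ = b * (v ⟨0, by omega⟩) ^ q ∧
        ∃ x : E, v = fun k : Fin r => x * c ^ (k : ℕ))
      ↔ ∃ s : E, s ≠ 0 ∧ Algebra.norm F s = 1 ∧ c ^ (r - 1) = b * s := by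
  subst hq
  have hq2 : 2 ≤ Fintype.card F := Fintype.one_lt_card
  constructor
  · rintro ⟨v, hv, hcond, x, rfl⟩
    have hx : x ≠ 0 := by
      rintro rfl
      apply hv
      funext k
      simp
    simp only [pow_zero, mul_one] at hcond
    -- hcond : x * c ^ (r - 1) = b * x ^ q
    refine ⟨x ^ (Fintype.card F - 1), pow_ne_zero _ hx,
      (norm_one_iff_pow_aux F E _ (pow_ne_zero _ hx)).mpr ⟨x, hx, rfl⟩, ?_⟩
    have hxq : x ^ Fintype.card F = x ^ (Fintype.card F - 1) * x := by
      rw [← pow_succ, Nat.sub_add_cancel (by omega)]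
    have h2 : c ^ (r - 1) * x = (b * x ^ (Fintype.card F - 1)) * x := by
      rw [mul_assoc, ← hxq, mul_comm (c ^ (r - 1)) x]
      exact hcond
    exact mul_right_cancel₀ hx h2
  · rintro ⟨s, hs, hnorm, hcs⟩
    obtain ⟨x, hx, hxs⟩ := (norm_one_iff_pow_aux F E s hs).mp hnorm
    refine ⟨fun k : Fin r => x * c ^ (k : ℕ), ?_, ?_, x, rfl⟩
    · intro h
      apply hx
      have := congrFun h (⟨0, by omega⟩ : Fin r)
      simpa using this
    · show x * c ^ (r - 1) = b * (x * c ^ (0 : ℕ)) ^ Fintype.card F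
      have hxq : x * x ^ (Fintype.card F - 1) = x ^ Fintype.card F := by
        rw [← pow_succ', Nat.sub_add_cancel (by omega)]
      rw [pow_zero, mul_one, hcs, ← hxs, ← mul_assoc, mul_comm x b, mul_assoc, hxq]
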